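/- Let N, N' ⊆ ℤ² be finite complete neighborhoods containing 0 with the same convex hull in ℝ². Then there exists a constant C such that |RT_N(n,m) − RT_{N'}(n,m)| ≤ C for all n, m ∈ ℕ. -/

import Mathlib

open Pointwise

/-- `mpow N k` is the `k`-fold Minkowski sum of `N` with itself (`mpow N 0 = {0}`). -/
def mpow (N : Set (ℤ × ℤ)) : ℕ → Set (ℤ × ℤ)
  | 0 => {0}
  | k + 1 => N + mpow N k

/-- The set of integer points in the rectangle `[0, n-1] × [0, m-1]`. -/
def rect (n m : ℕ) : Set (ℤ × ℤ) :=
  {p | 0 ≤ p.1 ∧ p.1 ≤ (n : ℤ) - 1 ∧ 0 ≤ p.2 ∧ p.2 ≤ (m : ℤ) - 1}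

/-- Real time function: the least `t` such that `[0,n-1]×[0,m-1] ⊆ N^t`. -/
noncomputable def RT (N : Set (ℤ × ℤ)) (n m : ℕ) : ℕ :=
  sInf {t : ℕ | rect n m ⊆ mpow N t}

/-- The canonical embedding of `ℤ²` into `ℝ²`. -/
def emb (v : ℤ × ℤ) : ℝ × ℝ := ((v.1 : ℝ), (v.2 : ℝ))

/-- `emb` as an additive monoid hom. -/
def embHom : (ℤ × ℤ) →+ ℝ × ℝ where
  toFun := emb
  map_zero' := by simp [emb]
  map_add' := by
    intro a b
    simp only [emb, Prod.ext_iff, Prod.fst_add, Prod.snd_add]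
    push_cast
    exact ⟨rfl, rfl⟩

lemma emb_inj : Function.Injective emb := by
  intro a b h
  simp only [emb, Prod.ext_iff] at h ⊢
  exact ⟨by exact_mod_cast h.1, by exact_mod_cast h.2⟩

lemma zero_mem_mpow {N : Set (ℤ × ℤ)} (h0 : (0 : ℤ × ℤ) ∈ N) :
    ∀ k, (0 : ℤ × ℤ) ∈ mpow N k := by
  intro k
  induction k with
  | zero => simp [mpow]
  | succ k ih =>
    have : (0 : ℤ × ℤ) + 0 ∈ N + mpow N k := Set.add_mem_add h0 ih
    simpa [mpow] using this

lemma mem_mpow_add {N : Set (ℤ × ℤ)} :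
    ∀ (a b : ℕ) (x y : ℤ × ℤ), x ∈ mpow N a → y ∈ mpow N b → x + y ∈ mpow N (a + b) := by
  intro a
  induction a with
  | zero =>
    intro b x y hx hy
    simp only [mpow, Set.mem_singleton_iff] at hx
    subst hx
    simpa using hy
  | succ a ih =>
    intro b x y hx hy
    obtain ⟨u, hu, v, hv, huv⟩ := hx
    have h : a + 1 + b = (a + b) + 1 := by omega
    rw [h]
    have : x + y = u + (v + y) := by rw [← huv]; ring
    rw [this]
    exact Set.add_mem_add hu (ih b v y hv hy)

lemma mem_mpow_mono {N : Set (ℤ × ℤ)} (h0 : (0 : ℤ × ℤ) ∈ N) {a b : ℕ} (hab : a ≤ b)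
    {x : ℤ × ℤ} (hx : x ∈ mpow N a) : x ∈ mpow N b := by
  obtain ⟨d, rfl⟩ := Nat.exists_eq_add_of_le hab
  simpa using mem_mpow_add a d x 0 hx (zero_mem_mpow h0 d)

lemma nsmul_mem_mpow {N : Set (ℤ × ℤ)} {p : ℤ × ℤ} (hp : p ∈ N) :
    ∀ n : ℕ, n • p ∈ mpow N n := by
  intro n
  induction n with
  | zero => simp [mpow]
  | succ n ih =>
    have hp1 : p ∈ mpow N 1 := by
      have : p + 0 ∈ N + mpow N 0 := Set.add_mem_add hp (by simp [mpow])
      simpa [mpow] using this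
    rw [succ_nsmul]
    exact mem_mpow_add n 1 _ _ ih hp1

lemma sum_nsmul_mem_mpow {N : Set (ℤ × ℤ)} (s : Finset (ℤ × ℤ)) (hs : ∀ p ∈ s, p ∈ N)
    (n : (ℤ × ℤ) → ℕ) : (∑ p ∈ s, n p • p) ∈ mpow N (∑ p ∈ s, n p) := by
  classical
  induction s using Finset.induction with
  | empty => simp [mpow]
  | insert a s ha ih =>
    rw [Finset.sum_insert ha, Finset.sum_insert ha]
    exact mem_mpow_add _ _ _ _ (nsmul_mem_mpow (hs a (Finset.mem_insert_self a s)) (n a))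
      (ih fun p hp => hs p (Finset.mem_insert_of_mem hp))

lemma finite_subset_mpow {N : Set (ℤ × ℤ)} (h0 : (0 : ℤ × ℤ) ∈ N)
    (hc : (⋃ k : ℕ, mpow N k) = Set.univ) {S : Set (ℤ × ℤ)} (hS : S.Finite) :
    ∃ t, S ⊆ mpow N t := by
  classical
  have key : ∀ x ∈ hS.toFinset, ∃ k, x ∈ mpow N k := by
    intro x _
    have : x ∈ ⋃ k : ℕ, mpow N k := by rw [hc]; trivial
    exact Set.mem_iUnion.mp this
  choose f hf using key
  refine ⟨hS.toFinset.sup (fun x => if h : x ∈ hS.toFinset then f x h else 0), ?_⟩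
  intro x hx
  have hx' : x ∈ hS.toFinset := hS.mem_toFinset.mpr hx
  refine mem_mpow_mono h0 ?_ (hf x hx')
  have := Finset.le_sup (f := fun x => if h : x ∈ hS.toFinset then f x h else 0) hx'
  simpa [hx'] using this

lemma exists_weights {N : Set (ℤ × ℤ)} (hN : N.Finite) (x : ℤ × ℤ)
    (hx : emb x ∈ convexHull ℝ (emb '' N)) :
    ∃ w : (ℤ × ℤ) → ℝ, (∀ p ∈ hN.toFinset, 0 ≤ w p) ∧
      (∑ p ∈ hN.toFinset, w p = 1) ∧ (∑ p ∈ hN.toFinset, w p • emb p = emb x) := by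
  classical
  have himg : emb '' N = ↑(hN.toFinset.image emb) := by simp
  rw [himg, Finset.convexHull_eq] at hx
  obtain ⟨w', hw'0, hw'1, hw'2⟩ := hx
  rw [Finset.centerMass_eq_of_sum_1 _ _ hw'1] at hw'2
  have hinjon : ∀ a ∈ hN.toFinset, ∀ b ∈ hN.toFinset, emb a = emb b → a = b :=
    fun a _ b _ h => emb_inj h
  refine ⟨fun p => w' (emb p), ?_, ?_, ?_⟩
  · intro p hp
    exact hw'0 _ (Finset.mem_image_of_mem _ hp)
  · rw [← Finset.sum_image hinjon]
    exact hw'1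
  · rw [← hw'2, Finset.sum_image hinjon]
    simp

/-- The key lemma: if two finite complete neighborhoods have the same convex hull,
powers of one are contained in slightly larger powers of the other. -/
lemma key_lemma {N N' : Set (ℤ × ℤ)} (hN : N.Finite)
    (h0 : (0 : ℤ × ℤ) ∈ N) (h0' : (0 : ℤ × ℤ) ∈ N')
    (hcomplete : (⋃ k : ℕ, mpow N k) = Set.univ)
    (hhull : convexHull ℝ (emb '' N) = convexHull ℝ (emb '' N')) :
    ∃ c : ℕ, ∀ k x, x ∈ mpow N' k → x ∈ mpow N (k + c) := by
  classical
  set NF := hN.toFinset with hNF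
  have hNFsub : ∀ p ∈ NF, p ∈ N := fun p hp => hN.mem_toFinset.mp hp
  -- Step 1: weight representation
  have wrep : ∀ k x, x ∈ mpow N' k → ∃ w : (ℤ × ℤ) → ℝ,
      (∀ p ∈ NF, 0 ≤ w p) ∧ (∑ p ∈ NF, w p = k) ∧ (∑ p ∈ NF, w p • emb p = emb x) := by
    intro k
    induction k with
    | zero =>
      intro x hx
      simp only [mpow, Set.mem_singleton_iff] at hx
      subst hx
      exact ⟨0, fun p _ => le_refl 0, by simp, by simp [emb]; rfl⟩
    | succ k ih =>
      intro x hx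
      obtain ⟨a, ha, y, hy, rfl⟩ := hx
      obtain ⟨w, hw0, hw1, hw2⟩ := ih y hy
      have ha' : emb a ∈ convexHull ℝ (emb '' N) := by
        rw [hhull]
        exact subset_convexHull ℝ _ (Set.mem_image_of_mem _ ha)
      obtain ⟨u, hu0, hu1, hu2⟩ := exists_weights hN a ha'
      refine ⟨fun p => u p + w p, fun p hp => add_nonneg (hu0 p hp) (hw0 p hp), ?_, ?_⟩
      · rw [Finset.sum_add_distrib, hw1, hu1]
        push_cast
        ring
      · have : ∑ p ∈ NF, (u p + w p) • emb p
            = ∑ p ∈ NF, u p • emb p + ∑ p ∈ NF, w p • emb p := by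
          rw [← Finset.sum_add_distrib]
          exact Finset.sum_congr rfl fun p _ => add_smul _ _ _
        rw [this, hu2, hw2]
        exact (map_add embHom a y).symm
  -- Step 2: the bounded box and its completeness constant
  set B : ℤ := ∑ p ∈ NF, (|p.1| + |p.2|) with hB
  have hBox : ((Set.Icc (-B) B ×ˢ Set.Icc (-B) B) : Set (ℤ × ℤ)).Finite :=
    (Set.finite_Icc _ _).prod (Set.finite_Icc _ _)
  obtain ⟨c, hc⟩ := finite_subset_mpow h0 hcomplete hBox
  refine ⟨c, ?_⟩
  intro k x hx
  obtain ⟨w, hw0, hw1, hw2⟩ := wrep k x hx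
  set n : (ℤ × ℤ) → ℕ := fun p => ⌊w p⌋₊ with hn
  set y : ℤ × ℤ := ∑ p ∈ NF, n p • p with hy
  have hymem : y ∈ mpow N (∑ p ∈ NF, n p) := sum_nsmul_mem_mpow NF hNFsub n
  have hsum_le : (∑ p ∈ NF, n p) ≤ k := by
    have h1 : ((∑ p ∈ NF, n p : ℕ) : ℝ) ≤ (k : ℝ) := by
      push_cast
      rw [← hw1]
      exact Finset.sum_le_sum fun p hp => Nat.floor_le (hw0 p hp)
    exact_mod_cast h1
  -- the remainder
  have hey : emb y = ∑ p ∈ NF, (n p : ℝ) • emb p := by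
    show embHom y = _
    rw [hy, map_sum]
    refine Finset.sum_congr rfl fun p hp => ?_
    rw [map_nsmul]
    exact (Nat.cast_smul_eq_nsmul ℝ (n p) (embHom p)).symm
  have herxy : emb (x - y) = ∑ p ∈ NF, (w p - (n p : ℝ)) • emb p := by
    have : emb (x - y) = emb x - emb y := map_sub embHom x y
    rw [this, ← hw2, hey, ← Finset.sum_sub_distrib]
    exact Finset.sum_congr rfl fun p _ => (sub_smul _ _ _).symm
  have hfrac : ∀ p ∈ NF, |w p - (n p : ℝ)| ≤ 1 := by
    intro p hp
    rw [abs_le]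
    constructor
    · have := Nat.floor_le (hw0 p hp)
      simp only [hn]
      linarith
    · have := Nat.lt_floor_add_one (w p)
      simp only [hn]
      linarith
  have habs_bound : ∀ (g : (ℤ × ℤ) → ℤ),
      (∀ p ∈ NF, |(g p : ℝ)| ≤ |(p.1 : ℝ)| + |(p.2 : ℝ)|) →
      |∑ p ∈ NF, (w p - (n p : ℝ)) * (g p : ℝ)| ≤ (B : ℝ) := by
    intro g hbnd
    refine (Finset.abs_sum_le_sum_abs _ _).trans ?_
    have hBr : (B : ℝ) = ∑ p ∈ NF, (|(p.1 : ℝ)| + |(p.2 : ℝ)|) := by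
      rw [hB]
      push_cast
      rfl
    rw [hBr]
    refine Finset.sum_le_sum fun p hp => ?_
    rw [abs_mul]
    calc |w p - (n p : ℝ)| * |(g p : ℝ)| ≤ 1 * (|(p.1 : ℝ)| + |(p.2 : ℝ)|) := by
          apply mul_le_mul (hfrac p hp) (hbnd p hp) (abs_nonneg _)
          exact zero_le_one
      _ = |(p.1 : ℝ)| + |(p.2 : ℝ)| := one_mul _
  have hr1 : |(x - y).1| ≤ B := by
    have e1 : (((x - y).1 : ℤ) : ℝ) = ∑ p ∈ NF, (w p - (n p : ℝ)) * ((p.1 : ℤ) : ℝ) := by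
      calc (((x - y).1 : ℤ) : ℝ) = (emb (x - y)).1 := rfl
        _ = (∑ p ∈ NF, (w p - (n p : ℝ)) • emb p).1 := by rw [herxy]
        _ = ∑ p ∈ NF, ((w p - (n p : ℝ)) • emb p).1 :=
            map_sum (AddMonoidHom.fst ℝ ℝ) _ NF
        _ = ∑ p ∈ NF, (w p - (n p : ℝ)) * ((p.1 : ℤ) : ℝ) :=
            Finset.sum_congr rfl fun p _ => by
              rw [Prod.smul_fst, smul_eq_mul]; rfl
    have h1 : |(((x - y).1 : ℤ) : ℝ)| ≤ (B : ℝ) := by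
      rw [e1]
      exact habs_bound (fun v => v.1) fun p hp =>
        le_add_of_nonneg_right (abs_nonneg _)
    exact_mod_cast h1
  have hr2 : |(x - y).2| ≤ B := by
    have e1 : (((x - y).2 : ℤ) : ℝ) = ∑ p ∈ NF, (w p - (n p : ℝ)) * ((p.2 : ℤ) : ℝ) := by
      calc (((x - y).2 : ℤ) : ℝ) = (emb (x - y)).2 := rfl
        _ = (∑ p ∈ NF, (w p - (n p : ℝ)) • emb p).2 := by rw [herxy]
        _ = ∑ p ∈ NF, ((w p - (n p : ℝ)) • emb p).2 :=
            map_sum (AddMonoidHom.snd ℝ ℝ) _ NF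
        _ = ∑ p ∈ NF, (w p - (n p : ℝ)) * ((p.2 : ℤ) : ℝ) :=
            Finset.sum_congr rfl fun p _ => by
              rw [Prod.smul_snd, smul_eq_mul]; rfl
    have h1 : |(((x - y).2 : ℤ) : ℝ)| ≤ (B : ℝ) := by
      rw [e1]
      exact habs_bound (fun v => v.2) fun p hp =>
        le_add_of_nonneg_left (abs_nonneg _)
    exact_mod_cast h1
  have hrbox : x - y ∈ ((Set.Icc (-B) B ×ˢ Set.Icc (-B) B) : Set (ℤ × ℤ)) := by
    obtain ⟨h1a, h1b⟩ := abs_le.mp hr1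
    obtain ⟨h2a, h2b⟩ := abs_le.mp hr2
    exact ⟨⟨h1a, h1b⟩, ⟨h2a, h2b⟩⟩
  have hxeq : x = y + (x - y) := by ring
  rw [hxeq]
  exact mem_mpow_mono h0 (by omega)
    (mem_mpow_add _ _ _ _ hymem (hc hrbox))

lemma rect_finite (n m : ℕ) : (rect n m).Finite := by
  have : rect n m ⊆ ((Set.Icc 0 ((n : ℤ) - 1) ×ˢ Set.Icc 0 ((m : ℤ) - 1)) : Set (ℤ × ℤ)) := by
    intro p hp
    exact ⟨⟨hp.1, hp.2.1⟩, ⟨hp.2.2.1, hp.2.2.2⟩⟩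
  exact ((Set.finite_Icc _ _).prod (Set.finite_Icc _ _)).subset this

theorem stmt_13 (N N' : Set (ℤ × ℤ)) (hN : N.Finite) (hN' : N'.Finite)
    (h0 : (0 : ℤ × ℤ) ∈ N) (h0' : (0 : ℤ × ℤ) ∈ N')
    (hcomplete : (⋃ k : ℕ, mpow N k) = Set.univ)
    (hcomplete' : (⋃ k : ℕ, mpow N' k) = Set.univ)
    (hhull : convexHull ℝ (emb '' N) = convexHull ℝ (emb '' N')) :
    ∃ C : ℕ, ∀ n m : ℕ, |(RT N n m : ℤ) - (RT N' n m : ℤ)| ≤ C := by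
  obtain ⟨c1, hc1⟩ := key_lemma hN h0 h0' hcomplete hhull
  obtain ⟨c2, hc2⟩ := key_lemma hN' h0' h0 hcomplete' hhull.symm
  refine ⟨max c1 c2, ?_⟩
  intro n m
  have hne : {t : ℕ | rect n m ⊆ mpow N t}.Nonempty := by
    obtain ⟨t, ht⟩ := finite_subset_mpow h0 hcomplete (rect_finite n m)
    exact ⟨t, ht⟩
  have hne' : {t : ℕ | rect n m ⊆ mpow N' t}.Nonempty := by
    obtain ⟨t, ht⟩ := finite_subset_mpow h0' hcomplete' (rect_finite n m)
    exact ⟨t, ht⟩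
  have hmem : rect n m ⊆ mpow N (RT N n m) := Nat.sInf_mem hne
  have hmem' : rect n m ⊆ mpow N' (RT N' n m) := Nat.sInf_mem hne'
  have hle1 : RT N n m ≤ RT N' n m + c1 :=
    Nat.sInf_le (fun x hx => hc1 _ _ (hmem' hx))
  have hle2 : RT N' n m ≤ RT N n m + c2 :=
    Nat.sInf_le (fun x hx => hc2 _ _ (hmem hx))
  rw [abs_le]
  constructor <;> push_cast <;> omega
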